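/- arXiv:1808.04140 — 2 statements merged into one kernel-verified Lean document; each statement's English description precedes it below -/
import Mathlib

section
/- Consider the linear time-varying ODE ẋ(t) = -M(t)x(t) + α(t)z_H on ℝ^{Nm}, where M(t) = K(L⊗I_m) + α(t)H̃ with L the Laplacian of a fixed connected graph, K > 0, H̃ = diag(h₁h₁ᵀ,…,h_Nh_Nᵀ) with rank of the stacked matrix H equal to m, α continuous positive with α(t) → 0 as t → ∞, and z_H ∈ ℝ^{Nm} fixed. Then every solution x(t) is bounded on [0,∞). -/
open Matrix Filter
open scoped Kronecker

lemma quad_lower_bound {ι : Type*} [Fintype ι] [DecidableEq ι] (A : Matrix ι ι ℝ)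
    (hpos : ∀ v : ι → ℝ, v ≠ 0 → 0 < v ⬝ᵥ A.mulVec v) :
    ∃ σ : ℝ, 0 < σ ∧ ∀ v : ι → ℝ, σ * (∑ p, v p ^ 2) ≤ v ⬝ᵥ A.mulVec v := by
  have hQcont : Continuous fun v : ι → ℝ => v ⬝ᵥ A.mulVec v := by
    simp only [dotProduct, Matrix.mulVec]
    fun_prop
  cases isEmpty_or_nonempty ι with
  | inl hempty =>
    refine ⟨1, one_pos, fun v => ?_⟩
    have hv : v = 0 := Subsingleton.elim _ _
    simp [hv]
  | inr hne =>
    set S : Set (ι → ℝ) := {v | ∑ p, v p ^ 2 = 1} with hS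
    have hcont : Continuous fun v : ι → ℝ => ∑ p, v p ^ 2 := by fun_prop
    have hSclosed : IsClosed S := isClosed_eq hcont continuous_const
    have hSbdd : Bornology.IsBounded S := by
      apply Bornology.IsBounded.subset (Metric.isBounded_closedBall (x := (0 : ι → ℝ)) (r := 1))
      intro v hv
      simp only [Metric.mem_closedBall, dist_zero_right]
      rw [pi_norm_le_iff_of_nonneg zero_le_one]
      intro p
      rw [Real.norm_eq_abs, abs_le_one_iff_mul_self_le_one, ← sq]
      calc v p ^ 2 ≤ ∑ q, v q ^ 2 :=
            Finset.single_le_sum (fun q _ => sq_nonneg (v q)) (Finset.mem_univ p)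
        _ = 1 := hv
    have hScompact : IsCompact S := Metric.isCompact_of_isClosed_isBounded hSclosed hSbdd
    have hSne : S.Nonempty := by
      classical
      obtain ⟨p₀⟩ := hne
      refine ⟨fun p => if p = p₀ then 1 else 0, ?_⟩
      simp [hS, Finset.sum_ite_eq', sq]
    obtain ⟨v₀, hv₀S, hv₀min⟩ := hScompact.exists_isMinOn hSne hQcont.continuousOn
    have hv₀ne : v₀ ≠ 0 := by
      intro h0
      rw [hS, Set.mem_setOf_eq, h0] at hv₀S
      simp at hv₀S
    refine ⟨v₀ ⬝ᵥ A.mulVec v₀, hpos v₀ hv₀ne, fun v => ?_⟩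
    by_cases hv0 : ∑ p, v p ^ 2 = 0
    · have : v = 0 := by
        funext p
        have := (Finset.sum_eq_zero_iff_of_nonneg (fun q _ => sq_nonneg (v q))).1 hv0 p
          (Finset.mem_univ p)
        exact pow_eq_zero_iff (two_ne_zero) |>.1 this
      simp [hv0, this]
    · have hspos : 0 < ∑ p, v p ^ 2 :=
        lt_of_le_of_ne (Finset.sum_nonneg fun q _ => sq_nonneg (v q)) (Ne.symm hv0)
      set s := ∑ p, v p ^ 2
      set c := (Real.sqrt s)⁻¹ with hc
      have hsqpos : 0 < Real.sqrt s := Real.sqrt_pos.2 hspos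
      have hc2 : c ^ 2 = s⁻¹ := by
        rw [hc, ← Real.sqrt_inv, Real.sq_sqrt (inv_nonneg.2 hspos.le)]
      have hmem : c • v ∈ S := by
        simp only [hS, Set.mem_setOf_eq, Pi.smul_apply, smul_eq_mul, mul_pow,
          ← Finset.mul_sum, hc2]
        exact inv_mul_cancel₀ hv0
      have hquad : (c • v) ⬝ᵥ A.mulVec (c • v) = c ^ 2 * (v ⬝ᵥ A.mulVec v) := by
        rw [Matrix.mulVec_smul, smul_dotProduct, dotProduct_smul]
        simp [sq, mul_assoc]
      have hge : v₀ ⬝ᵥ A.mulVec v₀ ≤ c ^ 2 * (v ⬝ᵥ A.mulVec v) := hquad ▸ hv₀min hmem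
      have : (v₀ ⬝ᵥ A.mulVec v₀) * s ≤ c ^ 2 * (v ⬝ᵥ A.mulVec v) * s :=
        mul_le_mul_of_nonneg_right hge hspos.le
      calc (v₀ ⬝ᵥ A.mulVec v₀) * s ≤ c ^ 2 * (v ⬝ᵥ A.mulVec v) * s := this
        _ = (s⁻¹ * s) * (v ⬝ᵥ A.mulVec v) := by rw [hc2]; ring
        _ = v ⬝ᵥ A.mulVec v := by rw [inv_mul_cancel₀ hv0, one_mul]


lemma stay_below {f f' : ℝ → ℝ} {T C : ℝ}
    (hf : ∀ t ≥ T, HasDerivAt f (f' t) t)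
    (h0 : f T ≤ C)
    (hd : ∀ t ≥ T, C ≤ f t → f' t < 0) :
    ∀ t ≥ T, f t ≤ C := by
  intro t ht
  have key := image_le_of_deriv_right_lt_deriv_boundary (f := f) (f' := f') (a := T) (b := t)
    (B := fun _ => C) (B' := fun _ => 0)
    (fun s hs => ((hf s hs.1).continuousAt).continuousWithinAt)
    (fun s hs => (hf s hs.1).hasDerivWithinAt)
    h0 (fun s => hasDerivAt_const s C)
    (fun s hs hfs => hd s hs.1 hfs.ge)
  exact key ⟨ht, le_rfl⟩

lemma lap_quad {N : ℕ} (w : Fin N → Fin N → ℝ)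
    (hsymm : ∀ i j, w i j = w j i) (hdiag : ∀ i, w i i = 0)
    (L : Matrix (Fin N) (Fin N) ℝ)
    (hL : ∀ i j, L i j = if i = j then ∑ k, w i k else -(w i j))
    (u : Fin N → ℝ) :
    u ⬝ᵥ L.mulVec u = (∑ i, ∑ j, w i j * (u i - u j) ^ 2) / 2 := by
  have hL' : ∀ i j, L i j = (if i = j then ∑ k, w i k else 0) - w i j := by
    intro i j
    rw [hL i j]
    by_cases hij : i = j
    · subst hij; simp [hdiag i]
    · simp [hij]
  have e1 : ∀ i, ∑ j, u i * ((if i = j then (∑ k, w i k) else 0) * u j)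
      = ∑ j, w i j * u i ^ 2 := by
    intro i
    have : ∀ j, u i * ((if i = j then (∑ k, w i k) else 0) * u j)
        = if i = j then (∑ k, w i k) * (u i * u j) else 0 := by
      intro j; by_cases hij : i = j <;> simp [hij] <;> ring
    rw [Finset.sum_congr rfl (fun j _ => this j), Finset.sum_ite_eq]
    simp only [Finset.mem_univ, if_true, Finset.sum_mul]
    exact Finset.sum_congr rfl fun j _ => by ring
  have lhs : u ⬝ᵥ L.mulVec u
      = (∑ i, ∑ j, w i j * u i ^ 2) - ∑ i, ∑ j, w i j * (u i * u j) := by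
    calc u ⬝ᵥ L.mulVec u = ∑ i, ∑ j, u i * (L i j * u j) := by
          simp [dotProduct, Matrix.mulVec, Finset.mul_sum]
      _ = ∑ i, ∑ j, (u i * ((if i = j then (∑ k, w i k) else 0) * u j)
            - w i j * (u i * u j)) := by
          refine Finset.sum_congr rfl fun i _ => Finset.sum_congr rfl fun j _ => ?_
          rw [hL' i j]; ring
      _ = ∑ i, ((∑ j, u i * ((if i = j then (∑ k, w i k) else 0) * u j))
            - ∑ j, w i j * (u i * u j)) := by
          exact Finset.sum_congr rfl fun i _ => Finset.sum_sub_distrib _ _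
      _ = ∑ i, ((∑ j, w i j * u i ^ 2) - ∑ j, w i j * (u i * u j)) := by
          exact Finset.sum_congr rfl fun i _ => by rw [e1 i]
      _ = _ := Finset.sum_sub_distrib _ _
  have hA : ∑ i, ∑ j, w i j * u j ^ 2 = ∑ i, ∑ j, w i j * u i ^ 2 := by
    rw [Finset.sum_comm]
    exact Finset.sum_congr rfl fun j _ =>
      Finset.sum_congr rfl fun i _ => by rw [hsymm]
  have expand : ∑ i, ∑ j, w i j * (u i - u j) ^ 2
      = (∑ i, ∑ j, w i j * u i ^ 2) + (∑ i, ∑ j, w i j * u j ^ 2)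
        - 2 * ∑ i, ∑ j, w i j * (u i * u j) := by
    rw [show (∑ i, ∑ j, w i j * (u i - u j) ^ 2)
        = ∑ i, ∑ j, (w i j * u i ^ 2 + w i j * u j ^ 2 - 2 * (w i j * (u i * u j))) from
      Finset.sum_congr rfl fun i _ => Finset.sum_congr rfl fun j _ => by ring]
    simp only [Finset.sum_add_distrib, Finset.sum_sub_distrib, ← Finset.mul_sum]
  rw [lhs, expand, hA]
  ring


lemma kron_quad {N m : ℕ} (L : Matrix (Fin N) (Fin N) ℝ) (v : Fin N × Fin m → ℝ) :
    v ⬝ᵥ (L ⊗ₖ (1 : Matrix (Fin m) (Fin m) ℝ)).mulVec v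
      = ∑ a : Fin m, (fun i => v (i, a)) ⬝ᵥ L.mulVec (fun i => v (i, a)) := by
  simp only [dotProduct, Matrix.mulVec, Matrix.kroneckerMap_apply,
    Matrix.one_apply, Fintype.sum_prod_type]
  have inner : ∀ (i j : Fin N) (a : Fin m),
      ∑ b, (L i j * if a = b then 1 else 0) * v (j, b) = L i j * v (j, a) := by
    intro i j a
    rw [Finset.sum_congr rfl (fun b _ =>
      show (L i j * if a = b then 1 else 0) * v (j, b)
        = if a = b then L i j * v (j, b) else 0 from by
          by_cases hb : a = b <;> simp [hb]),
      Finset.sum_ite_eq]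
    simp
  rw [Finset.sum_comm]
  refine Finset.sum_congr rfl fun a _ => Finset.sum_congr rfl fun i _ => ?_
  congr 1
  exact Finset.sum_congr rfl fun j _ => inner i j a

lemma htilde_quad {N m : ℕ} (h : Fin N → (Fin m → ℝ))
    (Htilde : Matrix (Fin N × Fin m) (Fin N × Fin m) ℝ)
    (hHtilde : ∀ p q, Htilde p q = if p.1 = q.1 then h p.1 p.2 * h p.1 q.2 else 0)
    (v : Fin N × Fin m → ℝ) :
    v ⬝ᵥ Htilde.mulVec v = ∑ i, (∑ a, h i a * v (i, a)) ^ 2 := by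
  simp only [dotProduct, Matrix.mulVec, hHtilde, Fintype.sum_prod_type]
  have inner : ∀ (i : Fin N) (a : Fin m),
      ∑ j, ∑ b, (if i = j then h i a * h i b else 0) * v (j, b)
        = h i a * ∑ b, h i b * v (i, b) := by
    intro i a
    have step : ∀ j, ∑ b, (if i = j then h i a * h i b else 0) * v (j, b)
        = if i = j then h i a * ∑ b, h i b * v (j, b) else 0 := by
      intro j
      by_cases hij : i = j
      · simp only [hij, if_true, Finset.mul_sum]
        exact Finset.sum_congr rfl fun b _ => by ring
      · simp [hij]
    rw [Finset.sum_congr rfl fun j _ => step j, Finset.sum_ite_eq]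
    simp
  refine Finset.sum_congr rfl fun i _ => ?_
  rw [Finset.sum_congr rfl fun a _ => by rw [inner i a], sq, Finset.sum_mul]
  exact Finset.sum_congr rfl fun a _ => by ring


lemma mulVec_inj_of_rank {N m : ℕ} (H : Matrix (Fin N) (Fin m) ℝ) (hrank : H.rank = m)
    (c : Fin m → ℝ) (hc : H.mulVec c = 0) : c = 0 := by
  have h1 := LinearMap.finrank_range_add_finrank_ker H.mulVecLin
  rw [Matrix.rank] at hrank
  have h2 : Module.finrank ℝ (Fin m → ℝ) = m := by simp
  rw [hrank, h2] at h1
  have h3 : Module.finrank ℝ (LinearMap.ker H.mulVecLin) = 0 := by omega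
  have h4 : LinearMap.ker H.mulVecLin = ⊥ := Submodule.finrank_eq_zero.1 h3
  have : c ∈ LinearMap.ker H.mulVecLin := by
    simp [LinearMap.mem_ker, Matrix.mulVecLin_apply, hc]
  rw [h4] at this
  simpa using this

lemma const_of_adj {N : ℕ} (G : SimpleGraph (Fin N)) (hconn : G.Connected)
    (u : Fin N → ℝ) (hadj : ∀ i j, G.Adj i j → u i = u j) : ∀ i j, u i = u j := by
  intro i j
  obtain ⟨p⟩ := hconn.preconnected i j
  induction p with
  | nil => rfl
  | cons hadj' p ih => exact (hadj _ _ hadj').trans ih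

lemma P_posdef
    {N m : ℕ}
    (w : Fin N → Fin N → ℝ)
    (hsymm : ∀ i j, w i j = w j i)
    (hnonneg : ∀ i j, 0 ≤ w i j)
    (hdiag : ∀ i, w i i = 0)
    (G : SimpleGraph (Fin N))
    (hG : ∀ i j, G.Adj i j ↔ i ≠ j ∧ 0 < w i j)
    (hconn : G.Connected)
    (L : Matrix (Fin N) (Fin N) ℝ)
    (hL : ∀ i j, L i j = if i = j then ∑ k, w i k else -(w i j))
    (h : Fin N → (Fin m → ℝ))
    (H : Matrix (Fin N) (Fin m) ℝ) (hHrows : ∀ i a, H i a = h i a)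
    (hrank : H.rank = m)
    (Htilde : Matrix (Fin N × Fin m) (Fin N × Fin m) ℝ)
    (hHtilde : ∀ p q, Htilde p q = if p.1 = q.1 then h p.1 p.2 * h p.1 q.2 else 0)
    (v : Fin N × Fin m → ℝ) (hv : v ≠ 0) :
    0 < v ⬝ᵥ ((L ⊗ₖ (1 : Matrix (Fin m) (Fin m) ℝ)) + Htilde).mulVec v := by
  have hNne : Nonempty (Fin N) := hconn.nonempty
  have hsplit : v ⬝ᵥ ((L ⊗ₖ (1 : Matrix (Fin m) (Fin m) ℝ)) + Htilde).mulVec v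
      = v ⬝ᵥ (L ⊗ₖ (1 : Matrix (Fin m) (Fin m) ℝ)).mulVec v + v ⬝ᵥ Htilde.mulVec v := by
    rw [Matrix.add_mulVec, dotProduct_add]
  have hLq := lap_quad w hsymm hdiag L hL
  have hLnonneg : ∀ u : Fin N → ℝ, 0 ≤ u ⬝ᵥ L.mulVec u := by
    intro u
    rw [hLq u]
    apply div_nonneg _ (by norm_num : (0:ℝ) ≤ 2)
    exact Finset.sum_nonneg fun i _ => Finset.sum_nonneg fun j _ =>
      mul_nonneg (hnonneg i j) (sq_nonneg _)
  have hKq := kron_quad L v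
  have hKnonneg : 0 ≤ v ⬝ᵥ (L ⊗ₖ (1 : Matrix (Fin m) (Fin m) ℝ)).mulVec v := by
    rw [hKq]; exact Finset.sum_nonneg fun a _ => hLnonneg _
  have hHq := htilde_quad h Htilde hHtilde v
  have hHnonneg : 0 ≤ v ⬝ᵥ Htilde.mulVec v := by
    rw [hHq]; exact Finset.sum_nonneg fun i _ => sq_nonneg _
  refine lt_of_le_of_ne (by rw [hsplit]; exact add_nonneg hKnonneg hHnonneg) ?_
  intro heq
  apply hv
  have hsum0 : v ⬝ᵥ (L ⊗ₖ (1 : Matrix (Fin m) (Fin m) ℝ)).mulVec v + v ⬝ᵥ Htilde.mulVec v = 0 := by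
    rw [← hsplit, ← heq]
  have hK0 : v ⬝ᵥ (L ⊗ₖ (1 : Matrix (Fin m) (Fin m) ℝ)).mulVec v = 0 := by linarith
  have hH0 : v ⬝ᵥ Htilde.mulVec v = 0 := by linarith
  -- each column of v is constant
  have hcols : ∀ (a : Fin m) (i j : Fin N), v (i, a) = v (j, a) := by
    intro a
    have hsumcols : ∑ b : Fin m, (fun i => v (i, b)) ⬝ᵥ L.mulVec (fun i => v (i, b)) = 0 := by
      rw [← hKq]; exact hK0
    have hcol0 : (fun i => v (i, a)) ⬝ᵥ L.mulVec (fun i => v (i, a)) = 0 :=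
      (Finset.sum_eq_zero_iff_of_nonneg (fun b _ => hLnonneg _)).1 hsumcols a (Finset.mem_univ a)
    rw [hLq] at hcol0
    have hdouble : ∑ i, ∑ j, w i j * (v (i, a) - v (j, a)) ^ 2 = 0 := by linarith
    have hterm : ∀ i j, w i j * (v (i, a) - v (j, a)) ^ 2 = 0 := by
      intro i j
      have h1 := (Finset.sum_eq_zero_iff_of_nonneg (fun i _ => Finset.sum_nonneg fun j _ =>
        mul_nonneg (hnonneg i j) (sq_nonneg _))).1 hdouble i (Finset.mem_univ i)
      exact (Finset.sum_eq_zero_iff_of_nonneg (fun j _ =>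
        mul_nonneg (hnonneg i j) (sq_nonneg _))).1 h1 j (Finset.mem_univ j)
    apply const_of_adj G hconn
    intro i j hadj
    obtain ⟨-, hw⟩ := (hG i j).1 hadj
    have := hterm i j
    have hsq : (v (i, a) - v (j, a)) ^ 2 = 0 := by
      rcases mul_eq_zero.1 this with h' | h'
      · exact absurd h' hw.ne'
      · exact h'
    have := pow_eq_zero_iff (two_ne_zero) |>.1 hsq
    linarith [this]
  -- the common column value
  obtain ⟨i₀⟩ := hNne
  set c : Fin m → ℝ := fun a => v (i₀, a) with hc
  have hrow0 : ∀ i, ∑ a, h i a * v (i, a) = 0 := by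
    intro i
    have := (Finset.sum_eq_zero_iff_of_nonneg (fun i _ => sq_nonneg _)).1 (hHq ▸ hH0) i
      (Finset.mem_univ i)
    exact pow_eq_zero_iff (two_ne_zero) |>.1 this
  have hHc : H.mulVec c = 0 := by
    funext i
    have : ∑ a, H i a * c a = ∑ a, h i a * v (i, a) := by
      refine Finset.sum_congr rfl fun a _ => ?_
      rw [hHrows i a, hc]
      simp only []
      rw [hcols a i₀ i]
    simp only [Matrix.mulVec, dotProduct, Pi.zero_apply]
    rw [this, hrow0 i]
  have hc0 : c = 0 := mulVec_inj_of_rank H hrank c hHc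
  funext p
  obtain ⟨i, a⟩ := p
  have : v (i, a) = c a := (hcols a i i₀)
  rw [this, hc0]
  rfl

/-- Every solution of the vectorized flow `ẋ = -M(t) x + α(t) z_H`, with
`M(t) = K (L ⊗ I_m) + α(t) H̃`, connected graph, full-rank stacked matrix `H`
and `α(t) → 0`, is bounded on `[0, ∞)`. -/
theorem flow_state_bounded
    (N m : ℕ)
    (w : Fin N → Fin N → ℝ)
    (hsymm : ∀ i j, w i j = w j i)
    (hnonneg : ∀ i j, 0 ≤ w i j)
    (hdiag : ∀ i, w i i = 0)
    (G : SimpleGraph (Fin N))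
    (hG : ∀ i j, G.Adj i j ↔ i ≠ j ∧ 0 < w i j)
    (hconn : G.Connected)
    (L : Matrix (Fin N) (Fin N) ℝ)
    (hL : ∀ i j, L i j = if i = j then ∑ k, w i k else -(w i j))
    (h : Fin N → (Fin m → ℝ))
    (H : Matrix (Fin N) (Fin m) ℝ) (hHrows : ∀ i a, H i a = h i a)
    (hrank : H.rank = m)
    (Htilde : Matrix (Fin N × Fin m) (Fin N × Fin m) ℝ)
    (hHtilde : ∀ p q, Htilde p q = if p.1 = q.1 then h p.1 p.2 * h p.1 q.2 else 0)
    (K : ℝ) (hK : 0 < K)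
    (α : ℝ → ℝ) (hαcont : Continuous α) (hαpos : ∀ t ≥ (0:ℝ), 0 < α t)
    (hα0 : Tendsto α atTop (nhds 0))
    (zH : Fin N × Fin m → ℝ)
    (M : ℝ → Matrix (Fin N × Fin m) (Fin N × Fin m) ℝ)
    (hM : ∀ t, M t = K • (L ⊗ₖ (1 : Matrix (Fin m) (Fin m) ℝ)) + α t • Htilde)
    (x : ℝ → (Fin N × Fin m → ℝ))
    (hx : ∀ t ≥ (0:ℝ), HasDerivAt x (-(M t).mulVec (x t) + α t • zH) t) :
    ∃ C : ℝ, ∀ t ≥ (0:ℝ), ‖x t‖ ≤ C := by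
  classical
  -- the positive definite matrix P = L⊗I + H̃ and its spectral lower bound σ
  obtain ⟨σ, hσpos, hσ⟩ := quad_lower_bound ((L ⊗ₖ (1 : Matrix (Fin m) (Fin m) ℝ)) + Htilde)
    (fun v hv => P_posdef w hsymm hnonneg hdiag G hG hconn L hL h H hHrows hrank
      Htilde hHtilde v hv)
  -- basic nonnegativity facts
  have hLnonneg : ∀ u : Fin N → ℝ, 0 ≤ u ⬝ᵥ L.mulVec u := by
    intro u
    rw [lap_quad w hsymm hdiag L hL u]
    apply div_nonneg _ (by norm_num : (0:ℝ) ≤ 2)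
    exact Finset.sum_nonneg fun i _ => Finset.sum_nonneg fun j _ =>
      mul_nonneg (hnonneg i j) (sq_nonneg _)
  have hKnonneg : ∀ v : Fin N × Fin m → ℝ,
      0 ≤ v ⬝ᵥ (L ⊗ₖ (1 : Matrix (Fin m) (Fin m) ℝ)).mulVec v := by
    intro v
    rw [kron_quad L v]; exact Finset.sum_nonneg fun a _ => hLnonneg _
  -- time after which α t ≤ K
  obtain ⟨T₀, hT₀⟩ : ∃ T₀ : ℝ, ∀ t ≥ T₀, α t < K :=
    eventually_atTop.1 (hα0.eventually (gt_mem_nhds hK))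
  set T : ℝ := max T₀ 0 with hT
  have hT0 : (0:ℝ) ≤ T := le_max_right _ _
  -- quadratic form bound for M t
  have hMq : ∀ t, 0 ≤ t → α t ≤ K → ∀ v : Fin N × Fin m → ℝ,
      α t * (σ * ∑ p, v p ^ 2) ≤ v ⬝ᵥ (M t).mulVec v := by
    intro t ht hαK v
    have hαt : 0 < α t := hαpos t ht
    have hsplit : v ⬝ᵥ (M t).mulVec v
        = K * (v ⬝ᵥ (L ⊗ₖ (1 : Matrix (Fin m) (Fin m) ℝ)).mulVec v)
          + α t * (v ⬝ᵥ Htilde.mulVec v) := by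
      rw [hM t, Matrix.add_mulVec, dotProduct_add, Matrix.smul_mulVec,
        Matrix.smul_mulVec, dotProduct_smul, dotProduct_smul,
        smul_eq_mul, smul_eq_mul]
    have hP : v ⬝ᵥ ((L ⊗ₖ (1 : Matrix (Fin m) (Fin m) ℝ)) + Htilde).mulVec v
        = v ⬝ᵥ (L ⊗ₖ (1 : Matrix (Fin m) (Fin m) ℝ)).mulVec v
          + v ⬝ᵥ Htilde.mulVec v := by
      rw [Matrix.add_mulVec, dotProduct_add]
    have h1 := hσ v
    rw [hP] at h1
    have h2 : α t * (σ * ∑ p, v p ^ 2)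
        ≤ α t * (v ⬝ᵥ (L ⊗ₖ (1 : Matrix (Fin m) (Fin m) ℝ)).mulVec v
          + v ⬝ᵥ Htilde.mulVec v) := by
      exact mul_le_mul_of_nonneg_left h1 hαt.le
    have h3 : α t * (v ⬝ᵥ (L ⊗ₖ (1 : Matrix (Fin m) (Fin m) ℝ)).mulVec v)
        ≤ K * (v ⬝ᵥ (L ⊗ₖ (1 : Matrix (Fin m) (Fin m) ℝ)).mulVec v) :=
      mul_le_mul_of_nonneg_right hαK (hKnonneg v)
    rw [hsplit]
    nlinarith [hKnonneg v]
  -- the squared Euclidean norm of the solution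
  set y : ℝ → ℝ := fun t => ∑ p, x t p ^ 2 with hy
  set f : ℝ → (Fin N × Fin m → ℝ) := fun t => -(M t).mulVec (x t) + α t • zH with hf
  set y' : ℝ → ℝ := fun t => ∑ p, (2:ℝ) * x t p ^ 1 * f t p with hy'
  have hyderiv : ∀ t ≥ (0:ℝ), HasDerivAt y (y' t) t := by
    intro t ht
    have hcomp : ∀ p : Fin N × Fin m, HasDerivAt (fun s => x s p) (f t p) t := by
      intro p
      exact (ContinuousLinearMap.proj (R := ℝ) (φ := fun _ : Fin N × Fin m => ℝ)
        p).hasFDerivAt.comp_hasDerivAt t (hx t ht)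
    have hsq : ∀ p : Fin N × Fin m,
        HasDerivAt (fun s => x s p ^ 2) ((2:ℝ) * x t p ^ 1 * f t p) t := by
      intro p
      have := (hcomp p).pow 2
      norm_num at this ⊢
      exact this
    exact HasDerivAt.fun_sum fun p _ => hsq p
  have hynonneg : ∀ t, 0 ≤ y t := fun t => Finset.sum_nonneg fun p _ => sq_nonneg _
  -- rewrite y' via dot products
  have hy'eq : ∀ t, y' t = -2 * (x t ⬝ᵥ (M t).mulVec (x t)) + 2 * (α t * (x t ⬝ᵥ zH)) := by
    intro t
    rw [hy']
    simp only [hf, Pi.add_apply, Pi.neg_apply, Pi.smul_apply, smul_eq_mul,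
      dotProduct]
    rw [Finset.mul_sum, Finset.mul_sum, Finset.mul_sum, ← Finset.sum_add_distrib]
    exact Finset.sum_congr rfl fun p _ => by ring
  -- crude Cauchy-Schwarz via sup bound
  set Z : ℝ := ∑ p, |zH p| with hZ
  have hZnonneg : 0 ≤ Z := Finset.sum_nonneg fun p _ => abs_nonneg _
  have hxsqrt : ∀ t (p : Fin N × Fin m), |x t p| ≤ Real.sqrt (y t) := by
    intro t p
    rw [← Real.sqrt_sq_eq_abs]
    apply Real.sqrt_le_sqrt
    exact Finset.single_le_sum (fun q _ => sq_nonneg (x t q)) (Finset.mem_univ p)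
  have hCS : ∀ t, x t ⬝ᵥ zH ≤ Real.sqrt (y t) * Z := by
    intro t
    calc x t ⬝ᵥ zH = ∑ p, x t p * zH p := rfl
      _ ≤ ∑ p, |x t p * zH p| := Finset.sum_le_sum fun p _ => le_abs_self _
      _ = ∑ p, |x t p| * |zH p| := by
          exact Finset.sum_congr rfl fun p _ => abs_mul _ _
      _ ≤ ∑ p, Real.sqrt (y t) * |zH p| :=
          Finset.sum_le_sum fun p _ =>
            mul_le_mul_of_nonneg_right (hxsqrt t p) (abs_nonneg _)
      _ = Real.sqrt (y t) * Z := by rw [hZ, Finset.mul_sum]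
  -- threshold and invariant level
  set R : ℝ := Z / σ + 1 with hR
  have hRpos : 0 < R := by positivity
  set Cy : ℝ := max (y T) (R ^ 2) with hCy
  have key : ∀ t ≥ T, Cy ≤ y t → y' t < 0 := by
    intro t ht hyt
    have ht0 : (0:ℝ) ≤ t := le_trans hT0 ht
    have hαt : 0 < α t := hαpos t ht0
    have hαK : α t ≤ K := (hT₀ t (le_trans (le_max_left _ _) ht)).le
    have hyR : R ^ 2 ≤ y t := le_trans (le_max_right _ _) hyt
    have hsqR : R ≤ Real.sqrt (y t) := by
      rw [show R = Real.sqrt (R ^ 2) from (Real.sqrt_sq hRpos.le).symm]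
      exact Real.sqrt_le_sqrt hyR
    have hsqpos : 0 < Real.sqrt (y t) := lt_of_lt_of_le hRpos hsqR
    have hyt_eq : Real.sqrt (y t) ^ 2 = y t := Real.sq_sqrt (hynonneg t)
    have hQ : α t * (σ * y t) ≤ x t ⬝ᵥ (M t).mulVec (x t) := hMq t ht0 hαK (x t)
    have hZσ : σ * R = Z + σ := by
      rw [hR]; field_simp
    rw [hy'eq t]
    have hbound : -2 * (x t ⬝ᵥ (M t).mulVec (x t)) + 2 * (α t * (x t ⬝ᵥ zH))
        ≤ -2 * (α t * (σ * y t)) + 2 * (α t * (Real.sqrt (y t) * Z)) := by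
      have h7 : α t * (x t ⬝ᵥ zH) ≤ α t * (Real.sqrt (y t) * Z) :=
        mul_le_mul_of_nonneg_left (hCS t) hαt.le
      linarith [hQ, h7]
    have hneg : -2 * (α t * (σ * y t)) + 2 * (α t * (Real.sqrt (y t) * Z)) < 0 := by
      set s := Real.sqrt (y t) with hs
      have hyy : y t = s * s := by rw [← hyt_eq]; ring
      have h5 : α t * s * (σ * R) ≤ α t * s * (σ * s) :=
        mul_le_mul_of_nonneg_left (mul_le_mul_of_nonneg_left hsqR hσpos.le)
          (mul_nonneg hαt.le hsqpos.le)
      have h6 : 0 < α t * s * σ := by positivity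
      calc -2 * (α t * (σ * y t)) + 2 * (α t * (s * Z))
          = -2 * (α t * s * (σ * s)) + 2 * (α t * s * Z) := by rw [hyy]; ring
        _ ≤ -2 * (α t * s * (σ * R)) + 2 * (α t * s * Z) := by linarith
        _ = -2 * (α t * s * σ) := by rw [hZσ]; ring
        _ < 0 := by linarith
    exact lt_of_le_of_lt hbound hneg
  have hbddy : ∀ t ≥ T, y t ≤ Cy :=
    stay_below (fun t ht => hyderiv t (le_trans hT0 ht)) (le_max_left _ _) key
  have hCynonneg : 0 ≤ Cy := le_trans (sq_nonneg R) (le_max_right _ _)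
  -- sup norm bound for t ≥ T
  have hnorm : ∀ t ≥ T, ‖x t‖ ≤ Real.sqrt Cy := by
    intro t ht
    rw [pi_norm_le_iff_of_nonneg (Real.sqrt_nonneg _)]
    intro p
    rw [Real.norm_eq_abs]
    calc |x t p| ≤ Real.sqrt (y t) := hxsqrt t p
      _ ≤ Real.sqrt Cy := Real.sqrt_le_sqrt (hbddy t ht)
  -- bound on the compact initial interval
  have hxcont : ContinuousOn x (Set.Icc 0 T) := fun t ht =>
    ((hx t ht.1).continuousAt).continuousWithinAt
  obtain ⟨C₀, hC₀⟩ := isCompact_Icc.exists_bound_of_continuousOn hxcont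
  refine ⟨max C₀ (Real.sqrt Cy), fun t ht => ?_⟩
  rcases le_total t T with hle | hge
  · exact le_trans (hC₀ t ⟨ht, hle⟩) (le_max_left _ _)
  · exact le_trans (hnorm t hge) (le_max_right _ _)
end

section
/- Under the distributed flow ẋ_i = K Σ_j A_{ij}(x_j - x_i) - α(t)(h_i h_iᵀ x_i - z_i h_i) over a fixed connected graph, with rank(H) = m, ∫₀^∞ α = ∞, and α(t) → 0, every solution satisfies lim_{t→∞} x_i(t) = y* = (HᵀH)⁻¹Hᵀz for all nodes i. -/
open Matrix Filter

section helpers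

lemma sum_sq_center {N : ℕ} (v : Fin N → ℝ) (c : ℝ) :
    ∑ i, (v i - c)^2 = (∑ i, (v i)^2) - 2*c*(∑ i, v i) + N * c^2 := by
  have : ∀ i, (v i - c)^2 = (v i)^2 - 2*c*(v i) + c^2 := fun i => by ring
  simp only [this, Finset.sum_add_distrib, Finset.sum_sub_distrib, ← Finset.mul_sum,
    Finset.sum_const, Finset.card_univ, Fintype.card_fin, nsmul_eq_mul]

lemma sum_sq_decomp {N : ℕ} (hN : 0 < N) (v : Fin N → ℝ) :
    ∑ i, (v i)^2 = N * ((∑ i, v i)/N)^2 + ∑ i, (v i - (∑ i, v i)/N)^2 := by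
  rw [sum_sq_center]
  have hN' : (N:ℝ) ≠ 0 := Nat.cast_ne_zero.2 hN.ne'
  field_simp
  ring

lemma const_of_energy_zero {N : ℕ} (A : Matrix (Fin N) (Fin N) ℝ)
    (hAnonneg : ∀ i j, 0 ≤ A i j)
    (G : SimpleGraph (Fin N))
    (hG : ∀ i j, G.Adj i j ↔ i ≠ j ∧ 0 < A i j)
    (hconn : G.Connected)
    (u : Fin N → ℝ)
    (hQ : ∑ i, ∑ j, A i j * (u i - u j)^2 = 0) :
    ∀ i j, u i = u j := by
  have hterm : ∀ i j, A i j * (u i - u j)^2 = 0 := by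
    intro i j
    have h1 : ∀ i : Fin N, 0 ≤ ∑ j, A i j * (u i - u j)^2 := fun i =>
      Finset.sum_nonneg fun j _ => mul_nonneg (hAnonneg i j) (sq_nonneg _)
    have h2 : ∑ j, A i j * (u i - u j)^2 = 0 :=
      le_antisymm (by
        have := (Finset.sum_eq_zero_iff_of_nonneg (fun i _ => h1 i)).1 hQ i (Finset.mem_univ i)
        exact this.le) (h1 i)
    have := (Finset.sum_eq_zero_iff_of_nonneg
      (fun j _ => mul_nonneg (hAnonneg i j) (sq_nonneg _))).1 h2 j (Finset.mem_univ j)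
    exact this
  have hadj : ∀ i j, G.Adj i j → u i = u j := by
    intro i j hij
    have hA : 0 < A i j := ((hG i j).1 hij).2
    have := hterm i j
    have h2 : (u i - u j)^2 = 0 := by
      rcases mul_eq_zero.1 this with h | h
      · exact absurd h hA.ne'
      · exact h
    have := sq_eq_zero_iff.1 h2
    linarith
  intro i j
  obtain ⟨w⟩ := hconn.preconnected i j
  induction w with
  | nil => rfl
  | cons hstep p ih => exact (hadj _ _ hstep).trans ih

lemma compact_constrained_sphere {N : ℕ} :
    IsCompact {u : Fin N → ℝ | (∑ i, u i) = 0 ∧ (∑ i, (u i)^2) = 1} := by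
  apply Metric.isCompact_of_isClosed_isBounded
  · have h1 : IsClosed {u : Fin N → ℝ | (∑ i, u i) = 0} :=
      isClosed_eq (by continuity) continuous_const
    have h2 : IsClosed {u : Fin N → ℝ | (∑ i, (u i)^2) = 1} :=
      isClosed_eq (by continuity) continuous_const
    exact h1.inter h2
  · rw [Metric.isBounded_iff_subset_closedBall 0]
    refine ⟨1, fun u hu => ?_⟩
    rw [Metric.mem_closedBall, dist_zero_right]
    refine (pi_norm_le_iff_of_nonneg zero_le_one).2 fun i => ?_
    rw [Real.norm_eq_abs, abs_le]
    have h1 : (u i)^2 ≤ 1 := by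
      rw [← hu.2]
      exact Finset.single_le_sum (fun j _ => sq_nonneg (u j)) (Finset.mem_univ i)
    constructor <;> nlinarith

lemma poincare {N : ℕ} (A : Matrix (Fin N) (Fin N) ℝ)
    (hAnonneg : ∀ i j, 0 ≤ A i j)
    (G : SimpleGraph (Fin N))
    (hG : ∀ i j, G.Adj i j ↔ i ≠ j ∧ 0 < A i j)
    (hconn : G.Connected) :
    ∃ c > 0, ∀ u : Fin N → ℝ,
      c * (∑ i, (u i - (∑ j, u j)/N)^2) ≤ ∑ i, ∑ j, A i j * (u i - u j)^2 := by
  set Q : (Fin N → ℝ) → ℝ := fun u => ∑ i, ∑ j, A i j * (u i - u j)^2 with hQdef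
  have hQcont : Continuous Q := by unfold Q; continuity
  have hQnonneg : ∀ u, 0 ≤ Q u := fun u =>
    Finset.sum_nonneg fun i _ => Finset.sum_nonneg fun j _ =>
      mul_nonneg (hAnonneg i j) (sq_nonneg _)
  set S := {u : Fin N → ℝ | (∑ i, u i) = 0 ∧ (∑ i, (u i)^2) = 1} with hSdef
  -- scaling fact
  have hscale : ∀ (v : Fin N → ℝ) (r : ℝ), Q (fun i => v i / r) = Q v / r^2 := by
    intro v r
    unfold Q
    rw [Finset.sum_div]
    refine Finset.sum_congr rfl fun i _ => ?_
    rw [Finset.sum_div]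
    refine Finset.sum_congr rfl fun j _ => ?_
    rcases eq_or_ne r 0 with h | h
    · simp [h]
    · field_simp
  by_cases hS : S.Nonempty
  · obtain ⟨u₀, hu₀S, hmin⟩ := compact_constrained_sphere.exists_isMinOn hS hQcont.continuousOn
    have hN : 0 < N := by
      by_contra hN
      have : N = 0 := by omega
      subst this
      have := hu₀S.2
      simp at this
    have hNne : (N:ℝ) ≠ 0 := Nat.cast_ne_zero.2 hN.ne'
    have hc : 0 < Q u₀ := by
      rcases lt_or_eq_of_le (hQnonneg u₀) with h | h
      · exact h
      · exfalso
        have hconst := const_of_energy_zero A hAnonneg G hG hconn u₀ h.symm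
        obtain ⟨i0⟩ : Nonempty (Fin N) := ⟨⟨0, hN⟩⟩
        have h1 : ∀ i, u₀ i = u₀ i0 := fun i => hconst i i0
        have h2 : (∑ i, u₀ i) = N * u₀ i0 := by
          simp only [fun i => h1 i, Finset.sum_const, Finset.card_univ, Fintype.card_fin,
            nsmul_eq_mul]
        have h3 : u₀ i0 = 0 := by
          have := hu₀S.1
          rw [h2] at this
          exact (mul_eq_zero.1 this).resolve_left hNne
        have h4 := hu₀S.2
        simp only [fun i => h1 i, h3] at h4
        simp at h4
    refine ⟨Q u₀, hc, fun u => ?_⟩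
    set sb := (∑ j, u j)/N with hsb
    set v : Fin N → ℝ := fun i => u i - sb with hv
    have hQv : Q v = Q u := by
      unfold Q v
      refine Finset.sum_congr rfl fun i _ => Finset.sum_congr rfl fun j _ => ?_
      ring_nf
    have hvsum : (∑ i, v i) = 0 := by
      unfold v sb
      rw [Finset.sum_sub_distrib]
      simp [Finset.sum_const, Finset.card_univ]
      field_simp
      ring
    set r2 := ∑ i, (v i)^2 with hr2
    rcases eq_or_ne r2 0 with hr | hr
    · rw [hr2] at hr
      rw [hr2, hr, mul_zero]
      exact hQnonneg u
    · have hr2pos : 0 < r2 :=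
        lt_of_le_of_ne (Finset.sum_nonneg fun i _ => sq_nonneg _) (Ne.symm hr)
      have hsq : Real.sqrt r2 ^ 2 = r2 := Real.sq_sqrt hr2pos.le
      have hsqpos : 0 < Real.sqrt r2 := Real.sqrt_pos.2 hr2pos
      set w : Fin N → ℝ := fun i => v i / Real.sqrt r2 with hw
      have hwS : w ∈ S := by
        constructor
        · unfold w
          rw [← Finset.sum_div, hvsum, zero_div]
        · unfold w
          have : ∀ i, (v i / Real.sqrt r2)^2 = (v i)^2 / r2 := fun i => by
            rw [div_pow, hsq]
          simp only [this, ← Finset.sum_div]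
          exact div_self hr
      have hQw : Q w = Q v / r2 := by
        unfold w
        rw [hscale v (Real.sqrt r2), hsq]
      have := hmin hwS
      rw [IsMinOn] at *
      have h5 : Q u₀ ≤ Q v / r2 := by rw [← hQw]; exact this
      calc Q u₀ * r2 ≤ (Q v / r2) * r2 := by
            exact mul_le_mul_of_nonneg_right h5 hr2pos.le
        _ = Q v := by field_simp
        _ = Q u := hQv
  · refine ⟨1, one_pos, fun u => ?_⟩
    rcases Nat.eq_zero_or_pos N with hN | hN
    · subst hN; simp [hQdef]
    have hNne : (N:ℝ) ≠ 0 := Nat.cast_ne_zero.2 hN.ne'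
    set sb := (∑ j, u j)/N with hsb
    set v : Fin N → ℝ := fun i => u i - sb with hv
    have hvsum : (∑ i, v i) = 0 := by
      unfold v sb
      rw [Finset.sum_sub_distrib]
      simp [Finset.sum_const, Finset.card_univ]
      field_simp
      ring
    have hzero : (∑ i, (v i)^2) = 0 := by
      by_contra hr
      have hr2pos : 0 < ∑ i, (v i)^2 :=
        lt_of_le_of_ne (Finset.sum_nonneg fun i _ => sq_nonneg _) (Ne.symm hr)
      have hsq : Real.sqrt (∑ i, (v i)^2) ^ 2 = ∑ i, (v i)^2 := Real.sq_sqrt hr2pos.le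
      apply hS
      refine ⟨fun i => v i / Real.sqrt (∑ i, (v i)^2), ?_, ?_⟩
      · rw [← Finset.sum_div, hvsum, zero_div]
      · have : ∀ i, (v i / Real.sqrt (∑ i, (v i)^2))^2 = (v i)^2 / (∑ i, (v i)^2) :=
          fun i => by rw [div_pow, hsq]
        simp only [this, ← Finset.sum_div]
        exact div_self hr
    calc 1 * (∑ i, (u i - (∑ j, u j)/N)^2) = ∑ i, (v i)^2 := by rw [one_mul]
      _ = 0 := hzero
      _ ≤ Q u := hQnonneg u

lemma rank_inj {N m : ℕ} (H : Matrix (Fin N) (Fin m) ℝ) (hrank : H.rank = m) :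
    ∀ y : Fin m → ℝ, H.mulVec y = 0 → y = 0 := by
  have h1 : LinearMap.ker H.mulVecLin = ⊥ := by
    have h2 := LinearMap.finrank_range_add_finrank_ker H.mulVecLin
    rw [Matrix.rank] at hrank
    rw [hrank] at h2
    simp only [Module.finrank_fintype_fun_eq_card, Fintype.card_fin] at h2
    have h3 : Module.finrank ℝ (LinearMap.ker H.mulVecLin) = 0 := by omega
    exact Submodule.finrank_eq_zero.1 h3
  intro y hy
  have : y ∈ LinearMap.ker H.mulVecLin := by
    simp [LinearMap.mem_ker, Matrix.mulVecLin_apply, hy]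
  rw [h1] at this
  simpa using this

lemma lsq_lower {N m : ℕ} (H : Matrix (Fin N) (Fin m) ℝ) (hrank : H.rank = m) :
    ∃ lam > 0, ∀ y : Fin m → ℝ,
      lam * (∑ a, (y a)^2) ≤ ∑ i, (H.mulVec y i)^2 := by
  have hinj := rank_inj H hrank
  set f : (Fin m → ℝ) → ℝ := fun y => ∑ i, (H.mulVec y i)^2 with hf
  have hfcont : Continuous f := by
    unfold f
    refine continuous_finset_sum _ fun i _ => ?_
    have : Continuous fun y : Fin m → ℝ => H.mulVec y i := by
      simp only [Matrix.mulVec, dotProduct]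
      continuity
    exact this.pow 2
  have hfnonneg : ∀ y, 0 ≤ f y := fun y => Finset.sum_nonneg fun i _ => sq_nonneg _
  set S := {y : Fin m → ℝ | ∑ a, (y a)^2 = 1} with hS
  have hScompact : IsCompact S := by
    apply Metric.isCompact_of_isClosed_isBounded
    · exact isClosed_eq (by continuity) continuous_const
    · rw [Metric.isBounded_iff_subset_closedBall 0]
      refine ⟨1, fun y hy => ?_⟩
      rw [Metric.mem_closedBall, dist_zero_right]
      refine (pi_norm_le_iff_of_nonneg zero_le_one).2 fun a => ?_
      rw [Real.norm_eq_abs, abs_le]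
      have h1 : (y a)^2 ≤ 1 := by
        rw [← hy]
        exact Finset.single_le_sum (fun b _ => sq_nonneg (y b)) (Finset.mem_univ a)
      constructor <;> nlinarith
  by_cases hSne : S.Nonempty
  · obtain ⟨y₀, hy₀S, hmin⟩ := hScompact.exists_isMinOn hSne hfcont.continuousOn
    have hlam : 0 < f y₀ := by
      rcases lt_or_eq_of_le (hfnonneg y₀) with hlt | heq
      · exact hlt
      · exfalso
        have hzero : H.mulVec y₀ = 0 := by
          funext i
          have h1 : ∀ i, (H.mulVec y₀ i)^2 = 0 := by
            intro i
            have := (Finset.sum_eq_zero_iff_of_nonneg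
              (fun j _ => sq_nonneg (H.mulVec y₀ j))).1 heq.symm i (Finset.mem_univ i)
            exact this
          have := h1 i
          simpa using sq_eq_zero_iff.1 this
        have := hinj y₀ hzero
        rw [this] at hy₀S
        simp [hS] at hy₀S
    refine ⟨f y₀, hlam, fun y => ?_⟩
    set r2 := ∑ a, (y a)^2 with hr2
    rcases eq_or_ne r2 0 with hr | hr
    · have hy0 : y = 0 := by
        funext a
        have := (Finset.sum_eq_zero_iff_of_nonneg
          (fun b _ => sq_nonneg (y b))).1 (hr2 ▸ hr) a (Finset.mem_univ a)
        simpa using sq_eq_zero_iff.1 this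
      rw [hr, mul_zero]
      exact hfnonneg y
    · have hr2pos : 0 < r2 :=
        lt_of_le_of_ne (Finset.sum_nonneg fun a _ => sq_nonneg _) (Ne.symm hr)
      have hsq : Real.sqrt r2 ^ 2 = r2 := Real.sq_sqrt hr2pos.le
      have hsqpos : 0 < Real.sqrt r2 := Real.sqrt_pos.2 hr2pos
      set w : Fin m → ℝ := fun a => y a / Real.sqrt r2 with hw
      have hwS : w ∈ S := by
        unfold S w
        have : ∀ a, (y a / Real.sqrt r2)^2 = (y a)^2 / r2 := fun a => by rw [div_pow, hsq]
        simp only [Set.mem_setOf_eq, this, ← Finset.sum_div]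
        exact div_self hr
      have hmw : H.mulVec w = fun i => H.mulVec y i / Real.sqrt r2 := by
        funext i
        unfold w
        simp only [Matrix.mulVec, dotProduct, Finset.sum_div]
        refine Finset.sum_congr rfl fun a _ => ?_
        field_simp
      have hfw : f w = f y / r2 := by
        unfold f
        rw [hmw, Finset.sum_div]
        refine Finset.sum_congr rfl fun i _ => ?_
        rw [div_pow, hsq]
      have h6 : f y₀ ≤ f w := isMinOn_iff.1 hmin w hwS
      have h5 : f y₀ ≤ f y / r2 := by rw [← hfw]; exact h6
      calc f y₀ * r2 ≤ (f y / r2) * r2 := mul_le_mul_of_nonneg_right h5 hr2pos.le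
        _ = f y := by field_simp
  · refine ⟨1, one_pos, fun y => ?_⟩
    have hzero : (∑ a, (y a)^2) = 0 := by
      by_contra hr
      have hr2pos : 0 < ∑ a, (y a)^2 :=
        lt_of_le_of_ne (Finset.sum_nonneg fun a _ => sq_nonneg _) (Ne.symm hr)
      have hsq : Real.sqrt (∑ a, (y a)^2) ^ 2 = ∑ a, (y a)^2 := Real.sq_sqrt hr2pos.le
      refine hSne ⟨fun a => y a / Real.sqrt (∑ a, (y a)^2), ?_⟩
      have h7 : ∀ a, (y a / Real.sqrt (∑ a, (y a)^2))^2 = (y a)^2 / (∑ a, (y a)^2) :=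
        fun a => by rw [div_pow, hsq]
      simp only [hS, Set.mem_setOf_eq, h7, ← Finset.sum_div]
      exact div_self hr
    rw [hzero, mul_zero]
    exact hfnonneg y

lemma gram_isUnit {N m : ℕ} (H : Matrix (Fin N) (Fin m) ℝ) (hrank : H.rank = m) :
    IsUnit (Hᵀ * H) := by
  rw [← Matrix.mulVec_injective_iff_isUnit]
  intro a b hab
  have hsub : (Hᵀ * H).mulVec (a - b) = 0 := by
    rw [Matrix.mulVec_sub, hab, sub_self]
  have hkey : ∀ y : Fin m → ℝ, (Hᵀ * H).mulVec y = 0 → y = 0 := by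
    intro y hy
    have h1 : y ⬝ᵥ ((Hᵀ * H).mulVec y) = ∑ i, (H.mulVec y i)^2 := by
      rw [← Matrix.mulVec_mulVec, Matrix.dotProduct_mulVec, Matrix.vecMul_transpose]
      simp [dotProduct, sq]
    rw [hy] at h1
    simp only [dotProduct_zero] at h1
    have h2 : H.mulVec y = 0 := by
      funext i
      have := (Finset.sum_eq_zero_iff_of_nonneg
        (fun j _ => sq_nonneg (H.mulVec y j))).1 h1.symm i (Finset.mem_univ i)
      simpa using sq_eq_zero_iff.1 this
    exact rank_inj H hrank y h2
  have := hkey (a - b) hsub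
  exact sub_eq_zero.1 this

lemma normal_equations {N m : ℕ} (H : Matrix (Fin N) (Fin m) ℝ) (hrank : H.rank = m)
    (z : Fin N → ℝ) :
    ∀ a, ∑ i, (H.mulVec ((Hᵀ * H)⁻¹.mulVec (Hᵀ.mulVec z)) i - z i) * H i a = 0 := by
  have hunit := gram_isUnit H hrank
  have hdet : IsUnit (Hᵀ * H).det := (Matrix.isUnit_iff_isUnit_det _).1 hunit
  set ys := (Hᵀ * H)⁻¹.mulVec (Hᵀ.mulVec z) with hys
  set w : Fin N → ℝ := fun i => H.mulVec ys i - z i with hw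
  have hsolve : (Hᵀ * H).mulVec ys = Hᵀ.mulVec z := by
    rw [hys, Matrix.mulVec_mulVec, Matrix.mul_nonsing_inv _ hdet, Matrix.one_mulVec]
  have h1 : Hᵀ.mulVec w = 0 := by
    have hw' : w = H.mulVec ys - z := by funext i; simp [hw]
    rw [hw', Matrix.mulVec_sub, Matrix.mulVec_mulVec, hsolve, sub_self]
  intro a
  have h2 : (Hᵀ.mulVec w) a = ∑ i, w i * H i a := by
    simp only [Matrix.mulVec, dotProduct, Matrix.transpose_apply]
    exact Finset.sum_congr rfl fun i _ => mul_comm _ _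
  have h3 : (Hᵀ.mulVec w) a = 0 := by rw [h1]; rfl
  calc ∑ i, ((H *ᵥ ys) i - z i) * H i a = ∑ i, w i * H i a := by
        exact Finset.sum_congr rfl fun i _ => by rw [hw]
    _ = (Hᵀ *ᵥ w) a := h2.symm
    _ = 0 := h3

lemma lap_identity {N m : ℕ} (A : Matrix (Fin N) (Fin N) ℝ)
    (hAsymm : ∀ i j, A i j = A j i) (u : Fin N → Fin m → ℝ) :
    ∑ i, ∑ a, (2 * u i a) * (∑ j, A i j * (u j a - u i a)) =
      -∑ i, ∑ j, A i j * ∑ a, (u i a - u j a)^2 := by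
  set T := ∑ i, ∑ j, ∑ a, 2 * A i j * (u i a * (u j a - u i a)) with hT
  have h1 : ∑ i, ∑ a, (2 * u i a) * (∑ j, A i j * (u j a - u i a)) = T := by
    rw [hT]
    refine Finset.sum_congr rfl fun i _ => ?_
    rw [Finset.sum_comm]
    refine Finset.sum_congr rfl fun a _ => ?_
    rw [Finset.mul_sum]
    refine Finset.sum_congr rfl fun j _ => ?_
    ring
  have h2 : T = ∑ i, ∑ j, ∑ a, 2 * A i j * (u j a * (u i a - u j a)) := by
    rw [hT, Finset.sum_comm]
    refine Finset.sum_congr rfl fun j _ => Finset.sum_congr rfl fun i _ =>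
      Finset.sum_congr rfl fun a _ => ?_
    rw [hAsymm j i]
  have h3 : T + T = -2 * ∑ i, ∑ j, A i j * ∑ a, (u i a - u j a)^2 := by
    nth_rewrite 2 [h2]
    nth_rewrite 1 [hT]
    rw [← Finset.sum_add_distrib]
    rw [Finset.mul_sum]
    refine Finset.sum_congr rfl fun i _ => ?_
    rw [← Finset.sum_add_distrib, Finset.mul_sum]
    refine Finset.sum_congr rfl fun j _ => ?_
    rw [← Finset.sum_add_distrib]
    have hrhs : (-2:ℝ) * (A i j * ∑ a, (u i a - u j a)^2)
        = ∑ a, (-2 * (A i j * (u i a - u j a)^2)) := by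
      rw [Finset.mul_sum, Finset.mul_sum]
    rw [hrhs]
    refine Finset.sum_congr rfl fun a _ => ?_
    ring
  rw [h1]
  linarith

end helpers

set_option maxHeartbeats 2000000 in
/-- Theorem 1 of the paper: over a fixed connected graph, with `rank H = m`,
`∫₀^∞ α = ∞` and `α(t) → 0`, every solution of the distributed flow converges
at every node to the unique least-squares solution `y* = (HᵀH)⁻¹Hᵀz`. -/
theorem flow_converges_to_least_squares
    (N m : ℕ)
    (A : Matrix (Fin N) (Fin N) ℝ)
    (hAsymm : ∀ i j, A i j = A j i)
    (hAnonneg : ∀ i j, 0 ≤ A i j)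
    (hAdiag : ∀ i, A i i = 0)
    (G : SimpleGraph (Fin N))
    (hG : ∀ i j, G.Adj i j ↔ i ≠ j ∧ 0 < A i j)
    (hconn : G.Connected)
    (h : Fin N → (Fin m → ℝ)) (z : Fin N → ℝ)
    (H : Matrix (Fin N) (Fin m) ℝ) (hHrows : ∀ i a, H i a = h i a)
    (hrank : H.rank = m)
    (K : ℝ) (hK : 0 < K)
    (α : ℝ → ℝ) (hαcont : Continuous α) (hαpos : ∀ t ≥ (0:ℝ), 0 < α t)
    (hαdiv : Tendsto (fun t => ∫ s in (0:ℝ)..t, α s) atTop atTop)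
    (hα0 : Tendsto α atTop (nhds 0))
    (x : ℝ → Fin N → (Fin m → ℝ))
    (hx : ∀ i, ∀ t ≥ (0:ℝ), HasDerivAt (fun s => x s i)
      (K • (∑ j, A i j • (x t j - x t i)) -
        α t • ((h i ⬝ᵥ x t i) • h i - z i • h i)) t) :
    ∀ i, Tendsto (fun t => x t i) atTop
      (nhds ((Hᵀ * H)⁻¹.mulVec (Hᵀ.mulVec z))) := by
  intro i₀
  have hN : 0 < N := i₀.pos
  have hNR : (0:ℝ) < N := Nat.cast_pos.2 hN
  set ys : Fin m → ℝ := (Hᵀ * H)⁻¹.mulVec (Hᵀ.mulVec z) with hysdef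
  -- the Lyapunov function
  obtain ⟨W, hWdef⟩ : ∃ W : ℝ → ℝ, W = fun t => ∑ i, ∑ a, (x t i a - ys a)^2 := ⟨_, rfl⟩
  obtain ⟨s, hsdef⟩ : ∃ s : ℝ → Fin N → ℝ, s = fun t i => ∑ a, h i a * (x t i a - ys a) := ⟨_, rfl⟩
  obtain ⟨r, hrdef⟩ : ∃ r : Fin N → ℝ, r = fun i => (∑ a, h i a * ys a) - z i := ⟨_, rfl⟩
  -- constants
  obtain ⟨c, hc, hpoin⟩ := poincare A hAnonneg G hG hconn
  obtain ⟨lam, hlam, hlsq'⟩ := lsq_lower H hrank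
  have hlsq : ∀ y : Fin m → ℝ,
      lam * (∑ a, (y a)^2) ≤ ∑ i, (∑ a, h i a * y a)^2 := by
    intro y
    have := hlsq' y
    have heq : ∀ i, H.mulVec y i = ∑ a, h i a * y a := by
      intro i
      simp only [Matrix.mulVec, dotProduct]
      exact Finset.sum_congr rfl fun a _ => by rw [hHrows]
    calc lam * (∑ a, (y a)^2) ≤ ∑ i, (H.mulVec y i)^2 := this
      _ = ∑ i, (∑ a, h i a * y a)^2 := Finset.sum_congr rfl fun i _ => by rw [heq]
  have hne : ∀ a, ∑ i, r i * h i a = 0 := by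
    intro a
    have h0 := normal_equations H hrank z a
    have heq : ∀ i, (H.mulVec ys i - z i) * H i a = r i * h i a := by
      intro i
      have h1 : H.mulVec ys i = ∑ b, h i b * ys b := by
        simp only [Matrix.mulVec, dotProduct]
        exact Finset.sum_congr rfl fun b _ => by rw [hHrows]
      rw [h1, hHrows, hrdef]
    rw [← h0]
    exact (Finset.sum_congr rfl fun i _ => (heq i).symm)
  obtain ⟨CH, hCHdef⟩ : ∃ CH : ℝ, CH = (∑ i, ∑ a, (h i a)^2) + 1 := ⟨_, rfl⟩
  have hCH : 0 < CH := by
    have : 0 ≤ ∑ i, ∑ a, (h i a)^2 :=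
      Finset.sum_nonneg fun i _ => Finset.sum_nonneg fun a _ => sq_nonneg _
    rw [hCHdef]; linarith
  obtain ⟨R, hRdef⟩ : ∃ R : ℝ, R = ∑ i, (r i)^2 := ⟨_, rfl⟩
  have hR : 0 ≤ R := hRdef ▸ Finset.sum_nonneg fun i _ => sq_nonneg _
  obtain ⟨θ, hθdef⟩ : ∃ θ : ℝ, θ = K * c / (4 * CH) := ⟨_, rfl⟩
  have hθ : 0 < θ := by rw [hθdef]; positivity
  obtain ⟨C4, hC4def⟩ : ∃ C4 : ℝ, C4 = R / θ + 1 := ⟨_, rfl⟩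
  have hC4 : 0 < C4 := by rw [hC4def]; positivity
  obtain ⟨μ, hμdef⟩ : ∃ μ : ℝ, μ = lam / N := ⟨_, rfl⟩
  have hμ : 0 < μ := by rw [hμdef]; positivity
  obtain ⟨εbar, hεbardef⟩ : ∃ εbar : ℝ, εbar = min (K * c / (8 * CH)) (K * c / (2 * μ)) := ⟨_, rfl⟩
  have hεbar : 0 < εbar := by
    rw [hεbardef]; exact lt_min (by positivity) (by positivity)
  -- the derivative of W
  obtain ⟨V, hVdef⟩ : ∃ V : ℝ → ℝ, V = fun t => ∑ i, ∑ a, (2 * (x t i a - ys a)) *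
      (K * (∑ j, A i j * (x t j a - x t i a)) -
        α t * ((h i ⬝ᵥ x t i) * h i a - z i * h i a)) := ⟨_, rfl⟩
  have hW' : ∀ t, 0 ≤ t → HasDerivAt W (V t) t := by
    intro t ht
    rw [hWdef, hVdef]
    refine HasDerivAt.fun_sum fun i _ => HasDerivAt.fun_sum fun a _ => ?_
    have hca : HasDerivAt (fun τ => x τ i a)
        ((K • (∑ j, A i j • (x t j - x t i)) -
          α t • ((h i ⬝ᵥ x t i) • h i - z i • h i)) a) t :=
      hasDerivAt_pi.1 (hx i t ht) a
    have hval : (K • (∑ j, A i j • (x t j - x t i)) -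
          α t • ((h i ⬝ᵥ x t i) • h i - z i • h i)) a
        = K * (∑ j, A i j * (x t j a - x t i a)) -
            α t * ((h i ⬝ᵥ x t i) * h i a - z i * h i a) := by
      simp [Finset.sum_apply, Pi.smul_apply, Pi.sub_apply, smul_eq_mul]
    rw [hval] at hca
    have hsq := ((hca.sub_const (ys a)).fun_pow 2)
    convert hsq using 1
    · rfl
    ring
  -- main differential inequality
  have hVle : ∀ t, 0 ≤ t → α t ≤ εbar → V t ≤ -μ * α t * W t + C4 * (α t)^2 := by
    intro t ht hαt
    have hβ0 : 0 ≤ α t := (hαpos t ht).le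
    obtain ⟨ubar, hubardef⟩ : ∃ ubar : Fin m → ℝ, ubar = fun a => (∑ i, (x t i a - ys a)) / N := ⟨_, rfl⟩
    obtain ⟨D2, hD2def⟩ : ∃ D2 : ℝ, D2 = ∑ i, ∑ a, ((x t i a - ys a) - ubar a)^2 := ⟨_, rfl⟩
    have hD2 : 0 ≤ D2 := by
      rw [hD2def]
      exact Finset.sum_nonneg fun i _ => Finset.sum_nonneg fun a _ => sq_nonneg _
    obtain ⟨Ebar, hEbardef⟩ : ∃ Ebar : ℝ, Ebar = ∑ a, (ubar a)^2 := ⟨_, rfl⟩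
    have hEbar : 0 ≤ Ebar := by
      rw [hEbardef]
      exact Finset.sum_nonneg fun a _ => sq_nonneg _
    obtain ⟨P, hPdef⟩ : ∃ P : ℝ, P = ∑ i, ∑ j, A i j * ∑ a, ((x t i a - ys a) - (x t j a - ys a))^2 := ⟨_, rfl⟩
    obtain ⟨p, hpdef⟩ : ∃ p : Fin N → ℝ, p = fun i => ∑ a, h i a * ubar a := ⟨_, rfl⟩
    obtain ⟨q, hqdef⟩ : ∃ q : Fin N → ℝ, q = fun i => ∑ a, h i a * ((x t i a - ys a) - ubar a) := ⟨_, rfl⟩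
    -- exact expression for V t
    have hVeq : V t = -K * P - α t * (2 * (∑ i, (s t i)^2) + 2 * (∑ i, s t i * r i)) := by
      rw [hVdef]
      have step1 : ∀ i a, (2 * (x t i a - ys a)) *
          (K * (∑ j, A i j * (x t j a - x t i a)) -
            α t * ((h i ⬝ᵥ x t i) * h i a - z i * h i a)) =
          K * ((2 * (x t i a - ys a)) *
              (∑ j, A i j * ((x t j a - ys a) - (x t i a - ys a)))) -
            α t * ((2 * (x t i a - ys a)) * ((h i ⬝ᵥ x t i) * h i a - z i * h i a)) := by
        intro i a
        have hsum : (∑ j, A i j * (x t j a - x t i a)) =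
            ∑ j, A i j * ((x t j a - ys a) - (x t i a - ys a)) :=
          Finset.sum_congr rfl fun j _ => by ring
        rw [hsum]; ring
      simp only [step1, Finset.sum_sub_distrib, ← Finset.mul_sum]
      have hlap := lap_identity A hAsymm (fun i a => x t i a - ys a)
      rw [hlap]
      have hα_part : ∀ i, (∑ a, (2 * (x t i a - ys a)) *
          ((h i ⬝ᵥ x t i) * h i a - z i * h i a)) = 2 * (s t i)^2 + 2 * (s t i * r i) := by
        intro i
        have hfold : (∑ a, h i a * (x t i a - ys a)) = s t i := by rw [hsdef]
        have hrfold : (∑ b, h i b * ys b) - z i = r i := by rw [hrdef]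
        have hdot : h i ⬝ᵥ x t i = s t i + (∑ b, h i b * ys b) := by
          rw [← hfold]
          rw [← Finset.sum_add_distrib]
          simp only [dotProduct]
          exact Finset.sum_congr rfl fun b _ => by ring
        rw [hdot]
        have hterm : ∀ a, (2 * (x t i a - ys a)) *
            ((s t i + ∑ b, h i b * ys b) * h i a - z i * h i a) =
            (2 * (s t i + ((∑ b, h i b * ys b) - z i))) * (h i a * (x t i a - ys a)) := by
          intro a; ring
        rw [Finset.sum_congr rfl fun a _ => hterm a, ← Finset.mul_sum, hfold, hrfold]
        ring
      rw [Finset.sum_congr rfl fun i _ => hα_part i]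
      rw [Finset.sum_add_distrib, ← Finset.mul_sum, ← Finset.mul_sum]
      rw [hPdef]
      ring
    -- decomposition of W
    have hb1 : W t = N * Ebar + D2 := by
      rw [hWdef, hD2def, hEbardef]
      simp only []
      rw [Finset.sum_comm (s := Finset.univ) (t := Finset.univ)
        (f := fun i a => (x t i a - ys a)^2)]
      rw [Finset.sum_comm (s := Finset.univ) (t := Finset.univ)
        (f := fun i a => ((x t i a - ys a) - ubar a)^2)]
      rw [Finset.mul_sum, ← Finset.sum_add_distrib]
      refine Finset.sum_congr rfl fun a _ => ?_
      have := sum_sq_decomp hN (fun i => x t i a - ys a)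
      rw [this, hubardef]
    -- Poincare bound
    have hb2 : c * D2 ≤ P := by
      have hper : ∀ a, c * (∑ i, ((x t i a - ys a) - (∑ j, (x t j a - ys a))/N)^2) ≤
          ∑ i, ∑ j, A i j * ((x t i a - ys a) - (x t j a - ys a))^2 :=
        fun a => hpoin (fun i => x t i a - ys a)
      have hsumper := Finset.sum_le_sum (fun a (_ : a ∈ Finset.univ) => hper a)
      have hL : (∑ a, c * (∑ i, ((x t i a - ys a) - (∑ j, (x t j a - ys a))/N)^2)) = c * D2 := by
        rw [hD2def, ← Finset.mul_sum]
        congr 1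
        rw [Finset.sum_comm]
        exact Finset.sum_congr rfl fun i _ => Finset.sum_congr rfl fun a _ => by
          rw [hubardef]
      have hR : (∑ a, ∑ i, ∑ j, A i j * ((x t i a - ys a) - (x t j a - ys a))^2) = P := by
        rw [hPdef, Finset.sum_comm]
        refine Finset.sum_congr rfl fun i _ => ?_
        rw [Finset.sum_comm]
        refine Finset.sum_congr rfl fun j _ => ?_
        rw [Finset.mul_sum]
      rw [hL, hR] at hsumper
      exact hsumper
    -- s = p + q
    have hspq : ∀ i, s t i = p i + q i := by
      intro i
      rw [hsdef, hpdef, hqdef]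
      simp only []
      rw [← Finset.sum_add_distrib]
      exact Finset.sum_congr rfl fun a _ => by ring
    -- Cauchy-Schwarz bound on q
    have hb4 : (∑ i, (q i)^2) ≤ CH * D2 := by
      have hcs : ∀ i, (q i)^2 ≤ (∑ a, (h i a)^2) * (∑ a, ((x t i a - ys a) - ubar a)^2) := by
        intro i
        rw [hqdef]
        exact Finset.sum_mul_sq_le_sq_mul_sq Finset.univ _ _
      have hhle : ∀ i : Fin N, (∑ a, (h i a)^2) ≤ CH := by
        intro i
        rw [hCHdef]
        have h1 : (∑ a, (h i a)^2) ≤ ∑ i, ∑ a, (h i a)^2 :=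
          Finset.single_le_sum (f := fun i => ∑ a, (h i a)^2)
            (fun i _ => Finset.sum_nonneg fun a _ => sq_nonneg _) (Finset.mem_univ i)
        linarith
      calc (∑ i, (q i)^2) ≤ ∑ i, CH * (∑ a, ((x t i a - ys a) - ubar a)^2) := by
            refine Finset.sum_le_sum fun i _ => ?_
            refine le_trans (hcs i) ?_
            exact mul_le_mul_of_nonneg_right (hhle i)
              (Finset.sum_nonneg fun a _ => sq_nonneg _)
        _ = CH * D2 := by rw [hD2def, Finset.mul_sum]
    -- coercivity bound on p
    have hb5 : lam * Ebar ≤ ∑ i, (p i)^2 := by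
      have h5 := hlsq ubar
      rw [hEbardef, hpdef]
      exact h5
    -- lower bound for sum of s^2
    have hb6 : lam/2 * Ebar - CH * D2 ≤ ∑ i, (s t i)^2 := by
      have hper : ∀ i, (p i)^2/2 - (q i)^2 ≤ (s t i)^2 := by
        intro i
        rw [hspq i]
        nlinarith [sq_nonneg (p i + 2 * q i)]
      have hsum := Finset.sum_le_sum (fun i (_ : i ∈ Finset.univ) => hper i)
      rw [Finset.sum_sub_distrib] at hsum
      have h1 : (∑ i, (p i)^2/2) = (∑ i, (p i)^2)/2 := by rw [Finset.sum_div]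
      rw [h1] at hsum
      linarith only [hsum, hb4, hb5]
    -- cross term
    have hb7 : (∑ i, s t i * r i) = ∑ i, r i * q i := by
      have h1 : (∑ i, s t i * r i) = (∑ i, r i * p i) + ∑ i, r i * q i := by
        rw [← Finset.sum_add_distrib]
        refine Finset.sum_congr rfl fun i _ => ?_
        rw [hspq i]; ring
      have h2 : (∑ i, r i * p i) = 0 := by
        have h3 : (∑ i, r i * p i) = ∑ a, (∑ i, r i * h i a) * ubar a := by
          have e1 : ∀ i, r i * p i = ∑ a, r i * (h i a * ubar a) := by
            intro i
            rw [hpdef]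
            simp only []
            rw [Finset.mul_sum]
          rw [Finset.sum_congr rfl fun i _ => e1 i, Finset.sum_comm]
          refine Finset.sum_congr rfl fun a _ => ?_
          rw [Finset.sum_mul]
          exact Finset.sum_congr rfl fun i _ => by ring
        rw [h3]
        simp only [hne, zero_mul, Finset.sum_const_zero]
      rw [h1, h2, zero_add]
    -- Young bound on the cross term
    have hb8 : -(2 * α t) * (∑ i, r i * q i) ≤ θ * (CH * D2) + ((α t)^2/θ) * R := by
      have hper : ∀ i, -(2 * α t) * (r i * q i) ≤ θ * (q i)^2 + ((α t)^2/θ) * (r i)^2 := by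
        intro i
        have key : 0 ≤ (θ * q i + α t * r i)^2 := sq_nonneg _
        have hθne : θ ≠ 0 := hθ.ne'
        have expand : (θ * q i + α t * r i)^2 / θ =
            θ * (q i)^2 + 2 * α t * (r i * q i) + ((α t)^2/θ) * (r i)^2 := by
          field_simp
          ring
        have hdiv : 0 ≤ (θ * q i + α t * r i)^2 / θ := div_nonneg key hθ.le
        rw [expand] at hdiv
        linarith
      have hsum := Finset.sum_le_sum (fun i (_ : i ∈ Finset.univ) => hper i)
      rw [← Finset.mul_sum] at hsum
      rw [Finset.sum_add_distrib, ← Finset.mul_sum, ← Finset.mul_sum] at hsum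
      rw [hRdef]
      have h9 := mul_le_mul_of_nonneg_left hb4 hθ.le
      linarith only [hsum, h9]
    -- assemble
    have hKP : -K * P ≤ -K * (c * D2) := by
      have := mul_le_mul_of_nonneg_left hb2 hK.le
      linarith
    have hs2 : -α t * (2 * (∑ i, (s t i)^2)) ≤
        -α t * (2 * (lam/2 * Ebar - CH * D2)) := by
      have h1 : 2 * (lam/2 * Ebar - CH * D2) ≤ 2 * (∑ i, (s t i)^2) := by linarith
      have h2 := mul_le_mul_of_nonneg_left h1 hβ0
      linarith
    have hcross : -α t * (2 * (∑ i, s t i * r i)) ≤ θ * (CH * D2) + ((α t)^2/θ) * R := by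
      rw [hb7]
      have heq : -α t * (2 * (∑ i, r i * q i)) = -(2 * α t) * (∑ i, r i * q i) := by ring
      rw [heq]
      exact hb8
    have hθCH : θ * CH = K * c / 4 := by
      rw [hθdef]
      field_simp
    have hαCH : α t * (CH * D2) ≤ K * c / 8 * D2 := by
      have h1 : α t ≤ K * c / (8 * CH) := le_trans hαt (by rw [hεbardef]; exact min_le_left _ _)
      have h2 : α t * CH ≤ K * c / 8 := by
        rw [div_mul_eq_div_div] at h1
        have := mul_le_mul_of_nonneg_right h1 hCH.le
        calc α t * CH ≤ (K * c / 8 / CH) * CH := this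
          _ = K * c / 8 := by field_simp
      calc α t * (CH * D2) = (α t * CH) * D2 := by ring
        _ ≤ K * c / 8 * D2 := mul_le_mul_of_nonneg_right h2 hD2
    have hμα : μ * α t * D2 ≤ K * c / 2 * D2 := by
      have h1 : α t ≤ K * c / (2 * μ) := le_trans hαt (by rw [hεbardef]; exact min_le_right _ _)
      have h2 : μ * α t ≤ K * c / 2 := by
        have := mul_le_mul_of_nonneg_left h1 hμ.le
        calc μ * α t ≤ μ * (K * c / (2 * μ)) := this
          _ = K * c / 2 := by field_simp
      exact mul_le_mul_of_nonneg_right h2 hD2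
    have hμN : μ * (N : ℝ) = lam := by
      rw [hμdef]
      field_simp
    have hRθ : ((α t)^2/θ) * R ≤ C4 * (α t)^2 := by
      have h1 : R/θ ≤ C4 := by rw [hC4def]; linarith
      have h2 : ((α t)^2/θ) * R = (R/θ) * (α t)^2 := by ring
      rw [h2]
      exact mul_le_mul_of_nonneg_right h1 (sq_nonneg _)
    have hθCHD2 : θ * (CH * D2) = K * c / 4 * D2 := by
      rw [← mul_assoc, hθCH]
    rw [hVeq, hb1]
    have hexp1 : -μ * α t * (N * Ebar + D2) + C4 * (α t)^2 =
        -(μ * (N:ℝ)) * (α t * Ebar) - μ * α t * D2 + C4 * (α t)^2 := by ring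
    rw [hexp1, hμN]
    linarith only [hKP, hs2, hcross, hαCH, hμα, hRθ, hθCHD2]
  -- Gronwall and conclusion
  have hWnonneg : ∀ t, 0 ≤ W t := fun t => by
    rw [hWdef]
    exact Finset.sum_nonneg fun i _ => Finset.sum_nonneg fun a _ => sq_nonneg _
  set Aint : ℝ → ℝ := fun t => ∫ σ in (0:ℝ)..t, α σ with hAintdef
  have hAint : ∀ t : ℝ, HasDerivAt Aint (α t) t := by
    intro t
    exact intervalIntegral.integral_hasDerivAt_right
      (hαcont.intervalIntegrable _ _)
      (hαcont.stronglyMeasurableAtFilter _ _)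
      hαcont.continuousAt
  have hWsmall : ∀ ε > (0:ℝ), ∀ᶠ t in atTop, W t < ε := by
    intro ε hε
    -- threshold for α
    have hδ : (0:ℝ) < min εbar (μ * (ε/2) / C4) := lt_min hεbar (by positivity)
    obtain ⟨T', hT'⟩ := (Metric.tendsto_atTop.1 hα0) _ hδ
    set T₁ : ℝ := max T' 0 with hT₁def
    have hT₁0 : (0:ℝ) ≤ T₁ := le_max_right _ _
    have hαbound : ∀ t, T₁ ≤ t → α t ≤ min εbar (μ * (ε/2) / C4) := by
      intro t htt
      have h1 := hT' t (le_trans (le_max_left _ _) htt)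
      rw [Real.dist_eq, sub_zero] at h1
      exact (le_abs_self _).trans h1.le
    -- the exponential-weighted function is antitone
    set g : ℝ → ℝ := fun t => (W t - ε/2) * Real.exp (μ * Aint t) with hgdef
    have hg' : ∀ t, 0 ≤ t → HasDerivAt g
        (V t * Real.exp (μ * Aint t) +
          (W t - ε/2) * (Real.exp (μ * Aint t) * (μ * α t))) t := by
      intro t ht
      exact ((hW' t ht).sub_const (ε/2)).mul (((hAint t).const_mul μ).exp)
    have hgderiv_nonpos : ∀ t, T₁ ≤ t →
        V t * Real.exp (μ * Aint t) +
          (W t - ε/2) * (Real.exp (μ * Aint t) * (μ * α t)) ≤ 0 := by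
      intro t htt
      have ht0 : (0:ℝ) ≤ t := le_trans hT₁0 htt
      have hαt := hαbound t htt
      have hV := hVle t ht0 (hαt.trans (min_le_left _ _))
      have hα2 : C4 * (α t)^2 ≤ μ * (ε/2) * α t := by
        have h1 : α t ≤ μ * (ε/2) / C4 := hαt.trans (min_le_right _ _)
        have h2 : 0 < α t := hαpos t ht0
        calc C4 * (α t)^2 = (C4 * α t) * α t := by ring
          _ ≤ (C4 * (μ * (ε/2) / C4)) * α t := by
              apply mul_le_mul_of_nonneg_right _ h2.le
              exact mul_le_mul_of_nonneg_left h1 hC4.le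
          _ = μ * (ε/2) * α t := by field_simp
      have hVle2 : V t ≤ -μ * α t * (W t - ε/2) := by
        have hexpand : -μ * α t * (W t - ε/2) = -μ * α t * W t + μ * (ε/2) * α t := by ring
        rw [hexpand]
        exact le_trans hV (by linarith)
      have hexp := Real.exp_pos (μ * Aint t)
      have h5 := mul_le_mul_of_nonneg_right hVle2 hexp.le
      have h6 : -μ * α t * (W t - ε/2) * Real.exp (μ * Aint t) +
          (W t - ε/2) * (Real.exp (μ * Aint t) * (μ * α t)) = 0 := by ring
      linarith
    have hant : AntitoneOn g (Set.Ici T₁) := by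
      apply antitoneOn_of_deriv_nonpos (convex_Ici T₁)
      · intro t htmem
        exact (hg' t (le_trans hT₁0 htmem)).continuousAt.continuousWithinAt
      · intro t htmem
        rw [interior_Ici] at htmem
        exact (hg' t (le_trans hT₁0 (le_of_lt htmem))).differentiableAt.differentiableWithinAt
      · intro t htmem
        rw [interior_Ici] at htmem
        rw [(hg' t (le_trans hT₁0 (le_of_lt htmem))).deriv]
        exact hgderiv_nonpos t (le_of_lt htmem)
    -- deduce the tail bound
    have hbound : ∀ t, T₁ ≤ t → W t ≤ ε/2 + g T₁ * Real.exp (-(μ * Aint t)) := by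
      intro t htt
      have h1 : g t ≤ g T₁ := hant (Set.self_mem_Ici) htt htt
      have h2 := mul_le_mul_of_nonneg_right h1 (Real.exp_pos (-(μ * Aint t))).le
      rw [hgdef] at h2
      simp only at h2
      rw [mul_assoc, ← Real.exp_add, add_neg_cancel, Real.exp_zero, mul_one] at h2
      have hgT : g T₁ = (W T₁ - ε/2) * Real.exp (μ * Aint T₁) := by rw [hgdef]
      rw [hgT]
      linarith
    have htail : Tendsto (fun t => g T₁ * Real.exp (-(μ * Aint t))) atTop (nhds 0) := by
      have hμA : Tendsto (fun t => μ * Aint t) atTop atTop :=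
        hαdiv.const_mul_atTop hμ
      have h1 : Tendsto (fun t => -(μ * Aint t)) atTop atBot :=
        tendsto_neg_atBot_iff.2 hμA
      have h2 : Tendsto (fun t => Real.exp (-(μ * Aint t))) atTop (nhds 0) :=
        Real.tendsto_exp_atBot.comp h1
      simpa using h2.const_mul (g T₁)
    have h3 : ∀ᶠ t in atTop, g T₁ * Real.exp (-(μ * Aint t)) < ε/2 :=
      htail.eventually_lt_const (by linarith)
    filter_upwards [h3, eventually_ge_atTop T₁] with t h4 h5
    have := hbound t h5
    linarith
  have hWtend : Tendsto W atTop (nhds 0) := by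
    rw [Metric.tendsto_atTop]
    intro ε hε
    obtain ⟨T, hT⟩ := (hWsmall ε hε).exists_forall_of_atTop
    exact ⟨T, fun t ht => by
      rw [Real.dist_eq, sub_zero, abs_of_nonneg (hWnonneg t)]
      exact hT t ht⟩
  -- conclude coordinatewise
  rw [tendsto_pi_nhds]
  intro a
  have hsq : ∀ t, (x t i₀ a - ys a)^2 ≤ W t := by
    intro t
    rw [hWdef]
    calc (x t i₀ a - ys a)^2 ≤ ∑ b, (x t i₀ b - ys b)^2 :=
          Finset.single_le_sum (f := fun b => (x t i₀ b - ys b)^2)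
            (fun b _ => sq_nonneg _) (Finset.mem_univ a)
      _ ≤ ∑ i, ∑ b, (x t i b - ys b)^2 :=
          Finset.single_le_sum (f := fun i => ∑ b, (x t i b - ys b)^2)
            (fun i _ => Finset.sum_nonneg fun b _ => sq_nonneg _) (Finset.mem_univ i₀)
  have hsqt : Tendsto (fun t => (x t i₀ a - ys a)^2) atTop (nhds 0) :=
    squeeze_zero (fun t => sq_nonneg _) hsq hWtend
  have habs : Tendsto (fun t => |x t i₀ a - ys a|) atTop (nhds 0) := by
    have h1 : Tendsto (fun t => Real.sqrt ((x t i₀ a - ys a)^2)) atTop (nhds 0) := by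
      have := (Real.continuous_sqrt.tendsto 0).comp hsqt
      simpa only [Real.sqrt_zero, Function.comp_def] using this
    simpa [Real.sqrt_sq_eq_abs] using h1
  have hdiff : Tendsto (fun t => x t i₀ a - ys a) atTop (nhds 0) := by
    have hneg : Tendsto (fun t => -|x t i₀ a - ys a|) atTop (nhds 0) := by
      simpa using habs.neg
    exact tendsto_of_tendsto_of_tendsto_of_le_of_le hneg habs
      (fun t => neg_abs_le _) (fun t => le_abs_self _)
  have := hdiff.add_const (ys a)
  simpa using this
end
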